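/- Let H be a real Hilbert space, V a closed subspace with orthogonal projection P : H → V, a, v ∈ H, and suppose φ = ∠(v,V⊥) with ∠(v,V⊥) ≥ π/2. Then P[C_H(a, v, φ)] = C_V(Pa, Pv, φ), i.e. the orthogonal projection of the cone onto V is the cone in V with apex Pa, axis Pv and the same half-aperture φ (in particular, when v ∈ V, v ≠ 0 and φ = π/2 this is the closed half-space {y ∈ V : ⟨y − Pa, v⟩ ≥ 0}). -/

import Mathlib

open scoped RealInnerProductSpace Classical

/-- The angle between a vector `v` and the orthogonal complement of `V`:
`∠(v,V⊥) = arccos (‖v - P v‖ / ‖v‖)` for `v ≠ 0` and `V ≠ H`, with the conventions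
`∠(v,V⊥) = π` when `v = 0` or `V = H`. -/
noncomputable def angleToPerp {H : Type*} [NormedAddCommGroup H] [InnerProductSpace ℝ H]
    [CompleteSpace H] (V : Submodule ℝ H) [CompleteSpace V] (v : H) : ℝ :=
  if v = 0 ∨ V = ⊤ then Real.pi
  else Real.arccos (‖v - (V.orthogonalProjection v : H)‖ / ‖v‖)

/-- If `φ = ∠(v,V⊥)` and `∠(v,V⊥) ≥ π/2`, then
`P[C_H(a,v,φ)] = C_V(P a, P v, φ)`, the cone in `V` with apex `P a`, axis `P v` and the
same half-aperture `φ`. -/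
theorem stmt11 {H : Type*} [NormedAddCommGroup H] [InnerProductSpace ℝ H] [CompleteSpace H]
    (V : Submodule ℝ H) [CompleteSpace V]
    (a v : H) (φ : ℝ) (hφψ : φ = angleToPerp V v) (hψ : Real.pi / 2 ≤ angleToPerp V v) :
    (fun u : H => (V.orthogonalProjection u : H)) ''
        {u : H | ⟪u - a, v⟫ ≥ Real.cos φ * (‖u - a‖ * ‖v‖)} =
      {y : H | y ∈ V ∧ ⟪y - (V.orthogonalProjection a : H), (V.orthogonalProjection v : H)⟫ ≥
        Real.cos φ * (‖y - (V.orthogonalProjection a : H)‖ *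
          ‖(V.orthogonalProjection v : H)‖)} := by
  by_cases h : v = 0 ∨ V = ⊤
  · have hφ : φ = Real.pi := by rw [hφψ, angleToPerp, if_pos h]
    have hcos : Real.cos φ = -1 := by rw [hφ, Real.cos_pi]
    have hle : ∀ x y : H, Real.cos φ * (‖x‖ * ‖y‖) ≤ ⟪x, y⟫ := by
      intro x y
      rw [hcos]
      have h1 := abs_real_inner_le_norm x y
      have h2 := neg_abs_le (⟪x, y⟫)
      linarith
    ext y
    simp only [Set.mem_image, Set.mem_setOf_eq]
    constructor
    · rintro ⟨u, -, rfl⟩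
      exact ⟨(V.orthogonalProjection u).2, hle _ _⟩
    · rintro ⟨hyV, -⟩
      exact ⟨y, hle _ _, Submodule.starProjection_eq_self_iff.mpr hyV⟩
  · push_neg at h
    obtain ⟨hv0, hVtop⟩ := h
    have hφ' : φ = Real.arccos (‖v - (V.orthogonalProjection v : H)‖ / ‖v‖) := by
      rw [hφψ, angleToPerp, if_neg (by push_neg; exact ⟨hv0, hVtop⟩)]
    have hψ' : Real.pi / 2 ≤ Real.arccos (‖v - (V.orthogonalProjection v : H)‖ / ‖v‖) := by
      rw [← hφ', hφψ]; exact hψ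
    have ht : ‖v - (V.orthogonalProjection v : H)‖ / ‖v‖ = 0 := by
      have h1 : Real.arccos (‖v - (V.orthogonalProjection v : H)‖ / ‖v‖) ≤ Real.pi / 2 :=
        Real.arccos_le_pi_div_two.mpr (by positivity)
      have := le_antisymm h1 hψ'
      exact Real.arccos_eq_pi_div_two.mp this
    have hPv : (V.orthogonalProjection v : H) = v := by
      have hnv : ‖v‖ ≠ 0 := norm_ne_zero_iff.mpr hv0
      field_simp at ht
      rw [mul_zero, norm_eq_zero, sub_eq_zero] at ht
      exact ht.symm
    have hv : v ∈ V := Submodule.starProjection_eq_self_iff.mp hPv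
    have hcos : Real.cos φ = 0 := by
      rw [hφ', ht, Real.arccos_zero, Real.cos_pi_div_two]
    have key : ∀ u : H, ⟪u - a, v⟫ =
        ⟪(V.orthogonalProjection u : H) - (V.orthogonalProjection a : H), v⟫ := by
      intro u
      have h1 : ⟪v, u - (V.orthogonalProjection u : H)⟫ = 0 :=
        (Submodule.sub_starProjection_mem_orthogonal (K := V) u) v hv
      have h2 : ⟪v, a - (V.orthogonalProjection a : H)⟫ = 0 :=
        (Submodule.sub_starProjection_mem_orthogonal (K := V) a) v hv
      rw [real_inner_comm] at h1 h2
      rw [inner_sub_left, inner_sub_left] at *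
      linarith
    ext y
    simp only [Set.mem_image, Set.mem_setOf_eq, hcos, zero_mul, ge_iff_le, hPv]
    constructor
    · rintro ⟨u, hu, rfl⟩
      exact ⟨(V.orthogonalProjection u).2, by rw [← key u]; exact hu⟩
    · rintro ⟨hyV, hy⟩
      refine ⟨y + (a - (V.orthogonalProjection a : H)), ?_, ?_⟩
      · have : y + (a - (V.orthogonalProjection a : H)) - a = y - (V.orthogonalProjection a : H) := by abel
        rw [this]; exact hy
      · have h1 : (V.orthogonalProjection (a - (V.orthogonalProjection a : H)) : H) = 0 := by
          have := Submodule.orthogonalProjectionOnto_apply_of_mem_orthogonal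
            (K := V) (Submodule.sub_starProjection_mem_orthogonal (K := V) a)
          exact congrArg Subtype.val this
        rw [map_add]
        push_cast
        rw [h1, add_zero]
        exact Submodule.starProjection_eq_self_iff.mpr hyV
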